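/- A poset P is minimal prime if and only if its comparability graph Comp(P) is a minimal prime graph. -/

import Mathlib

set_option autoImplicit false

/-- A set of vertices is autonomous if every vertex outside it is adjacent
either to all of its elements or to none of them. -/
def Autonomous {V : Type*} (G : SimpleGraph V) (A : Set V) : Prop :=
  ∀ v ∉ A, (∀ a ∈ A, G.Adj v a) ∨ (∀ a ∈ A, ¬ G.Adj v a)

/-- A graph is prime if it has more than three vertices and its only
autonomous sets are the trivial ones. -/
def PrimeGraph {V : Type*} (G : SimpleGraph V) : Prop :=
  3 < Cardinal.mk V ∧
    ∀ A : Set V, Autonomous G A → A = ∅ ∨ (∃ x, A = {x}) ∨ A = Set.univ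

/-- A graph is minimal prime if it is prime and every prime induced subgraph
of the same cardinality embeds a copy of it. -/
def MinimalPrimeGraph {V : Type*} (G : SimpleGraph V) : Prop :=
  PrimeGraph G ∧ ∀ W : Set V, Cardinal.mk W = Cardinal.mk V →
    PrimeGraph (G.induce W) → Nonempty (G ↪g G.induce W)

/-- A subset `A` of a poset is autonomous if every element outside `A`
compares in the same way to all elements of `A`. -/
def PosetAutonomous {α : Type*} (P : PartialOrder α) (A : Set α) : Prop :=
  ∀ v ∉ A, ∀ a ∈ A, ∀ a' ∈ A, (P.lt v a → P.lt v a') ∧ (P.lt a v → P.lt a' v)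

/-- A poset is prime if it has more than three elements and its only
autonomous sets are the trivial ones. -/
def PosetPrime {α : Type*} (P : PartialOrder α) : Prop :=
  3 < Cardinal.mk α ∧
    ∀ A : Set α, PosetAutonomous P A → A = ∅ ∨ (∃ x, A = {x}) ∨ A = Set.univ

/-- The comparability graph of a poset: distinct comparable elements are adjacent. -/
def compGraph {α : Type*} (P : PartialOrder α) : SimpleGraph α :=
  SimpleGraph.fromRel (fun x y => P.le x y)

/-- `P` embeds in `Q` if `P` is isomorphic to an induced subposet of `Q`. -/
def PosetEmbeds {α β : Type*} (P : PartialOrder α) (Q : PartialOrder β) : Prop :=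
  ∃ f : α → β, ∀ x y : α, P.le x y ↔ Q.le (f x) (f y)

/-- The induced subposet on a subset `W`. -/
def inducedPoset {α : Type*} (P : PartialOrder α) (W : Set α) : PartialOrder W where
  le x y := P.le x.1 y.1
  lt x y := P.le x.1 y.1 ∧ ¬ P.le y.1 x.1
  lt_iff_le_not_ge _ _ := Iff.rfl
  le_refl _ := P.le_refl _
  le_trans _ _ _ h1 h2 := P.le_trans _ _ _ h1 h2
  le_antisymm _ _ h1 h2 := Subtype.ext (P.le_antisymm _ _ h1 h2)

/-- A poset is minimal prime if it is prime and every prime induced subposet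
of the same cardinality embeds a copy of it. -/
def PosetMinimalPrime {α : Type*} (P : PartialOrder α) : Prop :=
  PosetPrime P ∧ ∀ W : Set α, Cardinal.mk W = Cardinal.mk α →
    PosetPrime (inducedPoset P W) → PosetEmbeds P (inducedPoset P W)


section Util
variable {α : Type*} (P : PartialOrder α)

lemma plt_trans {x y z : α} (h : P.lt x y) (h' : P.lt y z) : P.lt x z := by
  letI := P; exact lt_trans h h'

lemma plt_irrefl {x : α} (h : P.lt x x) : False := by
  letI := P; exact lt_irrefl x h

lemma plt_asymm {x y : α} (h : P.lt x y) (h' : P.lt y x) : False := by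
  letI := P; exact lt_asymm h h'

lemma plt_ne {x y : α} (h : P.lt x y) : x ≠ y := by
  letI := P; exact ne_of_lt h

lemma ple_of_lt {x y : α} (h : P.lt x y) : P.le x y := by
  letI := P; exact le_of_lt h

lemma plt_of_le_lt {x y z : α} (h : P.le x y) (h' : P.lt y z) : P.lt x z := by
  letI := P; exact lt_of_le_of_lt h h'

lemma plt_of_lt_le {x y z : α} (h : P.lt x y) (h' : P.le y z) : P.lt x z := by
  letI := P; exact lt_of_lt_of_le h h'

lemma ple_iff {x y : α} : P.le x y ↔ x = y ∨ P.lt x y := by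
  letI := P
  constructor
  · intro h; rcases eq_or_lt_of_le h with h' | h'
    · exact Or.inl h'
    · exact Or.inr h'
  · rintro (rfl | h)
    · exact le_refl x
    · exact le_of_lt h

lemma plt_of_le_ne {x y : α} (h : P.le x y) (h' : x ≠ y) : P.lt x y := by
  letI := P; exact lt_of_le_of_ne h h'

lemma adj_iff {x y : α} : (compGraph P).Adj x y ↔ (P.lt x y ∨ P.lt y x) := by
  rw [compGraph, SimpleGraph.fromRel_adj]
  constructor
  · rintro ⟨hne, h | h⟩
    · exact Or.inl (plt_of_le_ne P h hne)
    · exact Or.inr (plt_of_le_ne P h (Ne.symm hne))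
  · rintro (h | h)
    · exact ⟨plt_ne P h, Or.inl (ple_of_lt P h)⟩
    · exact ⟨(plt_ne P h).symm, Or.inr (ple_of_lt P h)⟩

/-- Poset-autonomous sets are graph-autonomous in the comparability graph. -/
lemma posetAutonomous_to_autonomous {A : Set α} (hA : PosetAutonomous P A) :
    Autonomous (compGraph P) A := by
  intro v hv
  by_cases h : ∃ a ∈ A, (compGraph P).Adj v a
  · obtain ⟨a, haA, hadj⟩ := h
    left
    intro a' ha'
    rcases (adj_iff P).1 hadj with hlt | hlt
    · exact (adj_iff P).2 (Or.inl ((hA v hv a haA a' ha').1 hlt))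
    · exact (adj_iff P).2 (Or.inr ((hA v hv a haA a' ha').2 hlt))
  · right
    push_neg at h
    exact h

lemma graphPrime_to_posetPrime (h : PrimeGraph (compGraph P)) : PosetPrime P :=
  ⟨h.1, fun A hA => h.2 A (posetAutonomous_to_autonomous P hA)⟩

end Util

section H1
universe u
variable {α : Type u} (P : PartialOrder α)

/-- Chain case of H1: a two-element piece of a chain-like autonomous set. -/
lemma chain_case {A : Set α} (hP : PosetPrime P) (a b : α)
    (haA : a ∈ A) (hbA : b ∈ A) (hab : P.lt a b)
    (hAcomp : ∀ v, v ∉ A → v ≠ a → v ≠ b →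
      ((P.lt v a ∨ P.lt a v) ∧ (P.lt v b ∨ P.lt b v)) ∨
      (¬P.lt v a ∧ ¬P.lt a v ∧ ¬P.lt v b ∧ ¬P.lt b v))
    (hchain : ∀ v ∈ A, v ≠ a → v ≠ b →
      ((P.lt v a ∨ P.lt a v) ∧ (P.lt v b ∨ P.lt b v))) : False := by
  classical
  set I : Set α := {x | P.le a x ∧ P.le x b} with hI
  have haI : a ∈ I := ⟨P.le_refl a, ple_of_lt P hab⟩
  have hbI : b ∈ I := ⟨ple_of_lt P hab, P.le_refl b⟩
  have hIaut : PosetAutonomous P I := by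
    intro v hv x hx x' hx'
    have hva : v ≠ a := fun h => hv (h ▸ haI)
    have hvb : v ≠ b := fun h => hv (h ▸ hbI)
    have hd : ((P.lt v a ∨ P.lt a v) ∧ (P.lt v b ∨ P.lt b v)) ∨
        (¬P.lt v a ∧ ¬P.lt a v ∧ ¬P.lt v b ∧ ¬P.lt b v) := by
      by_cases hvA : v ∈ A
      · exact Or.inl (hchain v hvA hva hvb)
      · exact hAcomp v hvA hva hvb
    rcases hd with ⟨h1, h2⟩ | ⟨h1, h2, h3, h4⟩
    · rcases h1 with hva' | hav
      · -- v < a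
        constructor
        · intro _; exact plt_of_lt_le P hva' hx'.1
        · intro hxv; exact absurd (plt_of_le_lt P hx.1 (plt_trans P hxv hva')) (plt_irrefl P)
      · rcases h2 with hvb' | hbv
        · -- a < v and v < b : v ∈ I, contradiction
          exact absurd ⟨ple_of_lt P hav, ple_of_lt P hvb'⟩ hv
        · -- b < v
          constructor
          · intro hvx; exact absurd (plt_trans P (plt_of_lt_le P hvx hx.2) hbv) (plt_irrefl P)
          · intro _; exact plt_of_le_lt P hx'.2 hbv
    · constructor
      · intro hvx; exact absurd (plt_of_lt_le P hvx hx.2) h3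
      · intro hxv; exact absurd (plt_of_le_lt P hx.1 hxv) h2
  rcases hP.2 I hIaut with h | ⟨x, hx⟩ | h
  · rw [h] at haI; exact (Set.notMem_empty a) haI
  · rw [hx] at haI hbI
    exact (plt_ne P hab) (haI.trans hbI.symm)
  · -- I = univ : a is a global minimum; the complement of {a} is autonomous
    set B : Set α := {x | x ≠ a} with hB
    have hBaut : PosetAutonomous P B := by
      intro v hv x hx x' hx'
      have hva : v = a := not_not.1 hv
      subst hva
      have hx'I : x' ∈ I := h.symm ▸ Set.mem_univ x'
      have hxI : x ∈ I := h.symm ▸ Set.mem_univ x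
      constructor
      · intro _; exact plt_of_le_ne P hx'I.1 (Ne.symm hx')
      · intro hxv; exact absurd (plt_of_le_lt P hxI.1 hxv) (plt_irrefl P)
    rcases hP.2 B hBaut with hh | ⟨x, hx⟩ | hh
    · have hbB : b ∈ B := (plt_ne P hab).symm
      rw [hh] at hbB
      exact (Set.notMem_empty b) hbB
    · -- α would have at most 2 elements
      have hmem : ∀ y : α, y = a ∨ y = x := by
        intro y
        by_cases hy : y = a
        · exact Or.inl hy
        · right
          have : y ∈ B := hy
          rw [hx] at this
          exact this
      have hinj : Function.Injective (fun y : α => ULift.up.{u} (if y = a then (0 : Fin 2) else 1)) := by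
        intro u w huw
        have huw' : (if u = a then (0 : Fin 2) else 1) = (if w = a then (0 : Fin 2) else 1) :=
          congrArg ULift.down huw
        by_cases hu : u = a <;> by_cases hw : w = a
        · exact hu.trans hw.symm
        · rw [if_pos hu, if_neg hw] at huw'; exact absurd huw' (by decide)
        · rw [if_neg hu, if_pos hw] at huw'; exact absurd huw' (by decide)
        · have h1 : u = x := (hmem u).resolve_left hu
          have h2 : w = x := (hmem w).resolve_left hw
          exact h1.trans h2.symm
      have hle : Cardinal.mk α ≤ 2 := by
        have h2 := Cardinal.mk_le_of_injective hinj
        simpa using h2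
      exact absurd (lt_of_lt_of_le hP.1 hle) (by norm_num)
    · have : a ∈ B := by rw [hh]; trivial
      exact this rfl

lemma posetPrime_to_graphPrime (hP : PosetPrime P) : PrimeGraph (compGraph P) := by
  classical
  refine ⟨hP.1, ?_⟩
  intro A hA
  by_contra hcon
  push_neg at hcon
  obtain ⟨hne, hns, hnu⟩ := hcon
  obtain ⟨a0, ha0⟩ := hne
  have hb : ∃ b ∈ A, b ≠ a0 := by
    by_contra h
    push_neg at h
    exact hns a0 (Set.eq_singleton_iff_unique_mem.2 ⟨ha0, fun y hy => h y hy⟩)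
  obtain ⟨b0, hb0A, hb0⟩ := hb
  obtain ⟨z, hz⟩ : ∃ z, z ∉ A := by
    by_contra h
    push_neg at h
    exact hnu (Set.eq_univ_of_forall h)
  by_cases hch : ∀ x ∈ A, ∀ y ∈ A, x ≠ y → P.lt x y ∨ P.lt y x
  · -- A is a chain
    have hAcomp : ∀ (a b : α), a ∈ A → b ∈ A → ∀ v, v ∉ A → v ≠ a → v ≠ b →
        ((P.lt v a ∨ P.lt a v) ∧ (P.lt v b ∨ P.lt b v)) ∨
        (¬P.lt v a ∧ ¬P.lt a v ∧ ¬P.lt v b ∧ ¬P.lt b v) := by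
      intro a b haA hbA v hvA hva hvb
      rcases hA v hvA with hall | hnone
      · exact Or.inl ⟨(adj_iff P).1 (hall a haA), (adj_iff P).1 (hall b hbA)⟩
      · right
        have h1 := (adj_iff P).not.1 (hnone a haA)
        have h2 := (adj_iff P).not.1 (hnone b hbA)
        push_neg at h1 h2
        exact ⟨h1.1, h1.2, h2.1, h2.2⟩
    have hchain : ∀ (a b : α), a ∈ A → b ∈ A → ∀ v ∈ A, v ≠ a → v ≠ b →
        ((P.lt v a ∨ P.lt a v) ∧ (P.lt v b ∨ P.lt b v)) := by
      intro a b haA hbA v hvA hva hvb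
      exact ⟨hch v hvA a haA hva, hch v hvA b hbA hvb⟩
    rcases hch a0 ha0 b0 hb0A (Ne.symm hb0) with h | h
    · exact chain_case P hP a0 b0 ha0 hb0A h (hAcomp a0 b0 ha0 hb0A) (hchain a0 b0 ha0 hb0A)
    · exact chain_case P hP b0 a0 hb0A ha0 h (hAcomp b0 a0 hb0A ha0) (hchain b0 a0 hb0A ha0)
  · -- A contains an incomparable pair; use its incomparability component
    push_neg at hch
    obtain ⟨c, hcA, d, hdA, hcd, hincomp⟩ := hch
    set r : α → α → Prop := fun u v => u ∈ A ∧ v ∈ A ∧ ¬P.lt u v ∧ ¬P.lt v u ∧ u ≠ v with hr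
    set C : Set α := {x | Relation.ReflTransGen r c x} with hC
    have hCsub : C ⊆ A := by
      intro x hx
      induction hx with
      | refl => exact hcA
      | tail _ h2 _ => exact h2.2.1
    have hcC : c ∈ C := Relation.ReflTransGen.refl
    have hdC : d ∈ C := Relation.ReflTransGen.single ⟨hcA, hdA, hincomp.1, hincomp.2, hcd⟩
    have hclosed : ∀ x ∈ C, ∀ y, r x y → y ∈ C := fun x hx y hxy =>
      Relation.ReflTransGen.tail hx hxy
    have hCaut : PosetAutonomous P C := by
      intro v hv x hx x' hx'
      have hd : (∀ w ∈ C, P.lt v w ∨ P.lt w v) ∨ (∀ w ∈ C, ¬P.lt v w ∧ ¬P.lt w v) := by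
        by_cases hvA : v ∈ A
        · left
          intro w hw
          by_contra hcomp
          push_neg at hcomp
          have hwv : w ≠ v := fun h => hv (h ▸ hw)
          exact hv (hclosed w hw v ⟨hCsub hw, hvA, hcomp.2, hcomp.1, hwv⟩)
        · rcases hA v hvA with hall | hnone
          · exact Or.inl (fun w hw => (adj_iff P).1 (hall w (hCsub hw)))
          · right
            intro w hw
            have := (adj_iff P).not.1 (hnone w (hCsub hw))
            push_neg at this
            exact this
      rcases hd with hcomp | hincp
      · have key : ∀ w ∈ C, (P.lt v w ↔ P.lt v c) ∧ (P.lt w v ↔ P.lt c v) := by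
          intro w hw
          induction hw with
          | refl => exact ⟨Iff.rfl, Iff.rfl⟩
          | @tail u w' hcu huw ih =>
            have huC : u ∈ C := hcu
            have hw'C : w' ∈ C := Relation.ReflTransGen.tail hcu huw
            have iff1 : P.lt v u ↔ P.lt v w' := by
              constructor
              · intro h
                rcases hcomp w' hw'C with h' | h'
                · exact h'
                · exact absurd (plt_trans P h' h) huw.2.2.2.1
              · intro h
                rcases hcomp u huC with h' | h'
                · exact h'
                · exact absurd (plt_trans P h' h) huw.2.2.1
            have iff2 : P.lt u v ↔ P.lt w' v := by
              constructor
              · intro h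
                rcases hcomp w' hw'C with h' | h'
                · exact absurd (plt_trans P h h') huw.2.2.1
                · exact h'
              · intro h
                rcases hcomp u huC with h' | h'
                · exact absurd (plt_trans P h h') huw.2.2.2.1
                · exact h'
            exact ⟨iff1.symm.trans ih.1, iff2.symm.trans ih.2⟩
        constructor
        · intro h
          exact (key x' hx').1.2 ((key x hx).1.1 h)
        · intro h
          exact (key x' hx').2.2 ((key x hx).2.1 h)
      · constructor
        · intro h; exact absurd h (hincp x hx).1
        · intro h; exact absurd h (hincp x hx).2
    rcases hP.2 C hCaut with h | ⟨x, hx⟩ | h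
    · exact absurd (h ▸ hcC) (Set.notMem_empty c)
    · exact hcd ((hx ▸ hcC : c ∈ ({x} : Set α)).trans (hx ▸ hdC : d ∈ ({x} : Set α)).symm)
    · exact hz (hCsub (h.symm ▸ Set.mem_univ z))

end H1

lemma compGraph_induce {α : Type*} (P : PartialOrder α) (W : Set α) :
    compGraph (inducedPoset P W) = (compGraph P).induce W := by
  ext x y
  show (SimpleGraph.fromRel _).Adj x y ↔ _
  rw [SimpleGraph.fromRel_adj]
  constructor
  · rintro ⟨hne, h⟩
    have hne' : x.1 ≠ y.1 := fun h' => hne (Subtype.ext h')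
    exact ⟨hne', h⟩
  · rintro ⟨hne', h⟩
    exact ⟨fun h' => hne' (congrArg Subtype.val h'), h⟩

section H2
variable {α : Type*} (P : PartialOrder α)

/-- Comparability (edge) relation of the poset `P`. -/
def EdgeP (x y : α) : Prop := P.lt x y ∨ P.lt y x

variable (Q : PartialOrder α)

/-- The two orders agree on the pair `(x, y)`. -/
def AgreePQ (x y : α) : Prop := (P.lt x y ∧ Q.lt x y) ∨ (P.lt y x ∧ Q.lt y x)

/-- One step of the forcing ("Γ") relation on ordered pairs: swap the pair, or
replace the second coordinate by a vertex nonadjacent to it. -/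
def StepP (p q : α × α) : Prop :=
  EdgeP P p.1 p.2 ∧ EdgeP P q.1 q.2 ∧
    (q = (p.2, p.1) ∨ (q.1 = p.1 ∧ ¬ EdgeP P p.2 q.2 ∧ p.2 ≠ q.2))

/-- Forcing reachability. -/
def ReachP (p q : α × α) : Prop := Relation.ReflTransGen (StepP P) p q

/-- The set of vertices spanned by the forcing class of an edge. -/
def SpanP (e : α × α) : Set α := {z | ∃ w, ReachP P e (z, w)}

namespace H2lemmas

variable {P Q}

lemma Esymm {x y : α} (h : EdgeP P x y) : EdgeP P y x := h.symm

lemma Ene {x y : α} (h : EdgeP P x y) : x ≠ y := by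
  rcases h with h | h
  · exact plt_ne P h
  · exact (plt_ne P h).symm

lemma agree_symm {x y : α} (h : AgreePQ P Q x y) : AgreePQ P Q y x := h.symm

lemma step_symm {p q : α × α} (h : StepP P p q) : StepP P q p := by
  obtain ⟨hep, heq, h⟩ := h
  refine ⟨heq, hep, ?_⟩
  rcases h with h | ⟨h1, h2, h3⟩
  · left; rw [h]
  · right
    exact ⟨h1.symm, fun he => h2 (Esymm he), fun he => h3 he.symm⟩

lemma reach_symm {p q : α × α} (h : ReachP P p q) : ReachP P q p := by
  induction h with
  | refl => exact Relation.ReflTransGen.refl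
  | tail _ h2 ih => exact Relation.ReflTransGen.head (step_symm h2) ih

lemma reach_edge {p q : α × α} (hp : EdgeP P p.1 p.2) (h : ReachP P p q) :
    EdgeP P q.1 q.2 := by
  induction h with
  | refl => exact hp
  | tail _ h2 _ => exact h2.2.1

lemma reach_trans {p q r : α × α} (h : ReachP P p q) (h' : ReachP P q r) :
    ReachP P p r := Relation.ReflTransGen.trans h h'

lemma mem_span_fst {e : α × α} (he : EdgeP P e.1 e.2) : e.1 ∈ SpanP P e :=
  ⟨e.2, by rw [Prod.mk.eta]; exact Relation.ReflTransGen.refl⟩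

lemma swap_step {e : α × α} (he : EdgeP P e.1 e.2) : StepP P e (e.2, e.1) :=
  ⟨he, Esymm he, Or.inl rfl⟩

lemma mem_span_snd {e : α × α} (he : EdgeP P e.1 e.2) : e.2 ∈ SpanP P e :=
  ⟨e.1, Relation.ReflTransGen.single (swap_step he)⟩

lemma span_of_reach {e p : α × α} (he : EdgeP P e.1 e.2) (h : ReachP P e p) :
    p.1 ∈ SpanP P e ∧ p.2 ∈ SpanP P e := by
  refine ⟨⟨p.2, by rwa [Prod.mk.eta]⟩, ⟨p.1, ?_⟩⟩
  exact Relation.ReflTransGen.tail h (swap_step (reach_edge he h))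

/-- Forcing within one transitive orientation: edges `ab`, `ad` with `bd`
nonadjacent point the same way at `a`. -/
lemma forceR (R : PartialOrder α) (hR : ∀ x y, (R.lt x y ∨ R.lt y x) ↔ EdgeP P x y)
    {a b d : α} (hab : EdgeP P a b) (had : EdgeP P a d) (hbd : ¬ EdgeP P b d) :
    R.lt a b ↔ R.lt a d := by
  constructor
  · intro h
    rcases (hR a d).2 had with h' | h'
    · exact h'
    · exact absurd ((hR b d).1 (Or.inr (plt_trans R h' h))) hbd
  · intro h
    rcases (hR a b).2 hab with h' | h'
    · exact h'
    · exact absurd ((hR b d).1 (Or.inl (plt_trans R h' h))) hbd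

/-- Same with shared second coordinate. -/
lemma forceR' (R : PartialOrder α) (hR : ∀ x y, (R.lt x y ∨ R.lt y x) ↔ EdgeP P x y)
    {a b d : α} (hab : EdgeP P a b) (had : EdgeP P a d) (hbd : ¬ EdgeP P b d) :
    R.lt b a ↔ R.lt d a := by
  constructor
  · intro h
    rcases (hR a d).2 had with h' | h'
    · exact absurd ((hR b d).1 (Or.inl (plt_trans R h h'))) hbd
    · exact h'
  · intro h
    rcases (hR a b).2 hab with h' | h'
    · exact absurd ((hR b d).1 (Or.inr (plt_trans R h h'))) hbd
    · exact h'

variable (hsame : ∀ x y, (P.lt x y ∨ P.lt y x) ↔ (Q.lt x y ∨ Q.lt y x))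

lemma force (hsame : ∀ x y, (P.lt x y ∨ P.lt y x) ↔ (Q.lt x y ∨ Q.lt y x))
    {a b d : α} (hab : EdgeP P a b) (had : EdgeP P a d) (hbd : ¬ EdgeP P b d) :
    AgreePQ P Q a b ↔ AgreePQ P Q a d := by
  have hRP : ∀ x y, (P.lt x y ∨ P.lt y x) ↔ EdgeP P x y := fun x y => Iff.rfl
  have hRQ : ∀ x y, (Q.lt x y ∨ Q.lt y x) ↔ EdgeP P x y := fun x y => (hsame x y).symm
  have hPiff := forceR (P := P) P hRP hab had hbd
  have hQiff := forceR (P := P) Q hRQ hab had hbd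
  have hPiff' := forceR' (P := P) P hRP hab had hbd
  have hQiff' := forceR' (P := P) Q hRQ hab had hbd
  rcases hab with hpab | hpba
  · have hpad : P.lt a d := hPiff.1 hpab
    constructor
    · rintro (⟨_, hq⟩ | ⟨hp, _⟩)
      · exact Or.inl ⟨hpad, hQiff.1 hq⟩
      · exact absurd hp (fun h => plt_asymm P hpab h)
    · rintro (⟨_, hq⟩ | ⟨hp, _⟩)
      · exact Or.inl ⟨hpab, hQiff.2 hq⟩
      · exact absurd hp (fun h => plt_asymm P hpad h)
  · have hpda : P.lt d a := hPiff'.1 hpba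
    constructor
    · rintro (⟨hp, _⟩ | ⟨_, hq⟩)
      · exact absurd hp (fun h => plt_asymm P hpba h)
      · exact Or.inr ⟨hpda, hQiff'.1 hq⟩
    · rintro (⟨hp, _⟩ | ⟨_, hq⟩)
      · exact absurd hp (fun h => plt_asymm P hpda h)
      · exact Or.inr ⟨hpba, hQiff'.2 hq⟩

lemma agree_step (hsame : ∀ x y, (P.lt x y ∨ P.lt y x) ↔ (Q.lt x y ∨ Q.lt y x))
    {p q : α × α} (h : StepP P p q) : AgreePQ P Q p.1 p.2 ↔ AgreePQ P Q q.1 q.2 := by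
  obtain ⟨hep, heq, h⟩ := h
  rcases h with h | ⟨h1, h2, h3⟩
  · rw [h]
    exact ⟨agree_symm, agree_symm⟩
  · have heq' : EdgeP P p.1 q.2 := by rwa [h1] at heq
    have := force hsame hep heq' h2
    rw [h1]
    exact this

lemma agree_reach (hsame : ∀ x y, (P.lt x y ∨ P.lt y x) ↔ (Q.lt x y ∨ Q.lt y x))
    {p q : α × α} (h : ReachP P p q) : AgreePQ P Q p.1 p.2 ↔ AgreePQ P Q q.1 q.2 := by
  induction h with
  | refl => exact Iff.rfl
  | tail _ h2 ih => exact ih.trans (agree_step hsame h2)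

/-- The span of a forcing class is an autonomous set of the comparability graph. -/
lemma span_autonomous (e : α × α) (he : EdgeP P e.1 e.2) :
    Autonomous (compGraph P) (SpanP P e) := by
  classical
  intro v hv
  have hvne : ∀ z ∈ SpanP P e, v ≠ z := fun z hz h => hv (h ▸ hz)
  -- main uniformity claim
  have key : ∀ p, ReachP P e p →
      ((EdgeP P v p.1 ↔ EdgeP P v e.1) ∧ (EdgeP P v p.2 ↔ EdgeP P v e.1)) := by
    intro p hp
    induction hp with
    | refl =>
      refine ⟨Iff.rfl, ?_⟩
      constructor
      · intro h2
        by_contra h1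
        -- v adjacent to e.2 but not e.1 : then (e.2, v) is in the class
        have hstep : StepP P (e.2, e.1) (e.2, v) :=
          ⟨Esymm he, Esymm h2, Or.inr ⟨rfl, fun hh => h1 (Esymm hh), fun hh => (hvne e.1 (mem_span_fst he) hh.symm)⟩⟩
        have : v ∈ SpanP P e := by
          have hr : ReachP P e (e.2, v) :=
            Relation.ReflTransGen.tail (Relation.ReflTransGen.single (swap_step he)) hstep
          exact (span_of_reach he hr).2
        exact hv this
      · intro h1
        by_contra h2
        have hstep : StepP P e (e.1, v) :=
          ⟨he, Esymm h1, Or.inr ⟨rfl, fun hh => h2 (Esymm hh), fun hh => (hvne e.2 (mem_span_snd he) hh.symm)⟩⟩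
        have : v ∈ SpanP P e :=
          (span_of_reach he (Relation.ReflTransGen.single hstep)).2
        exact hv this
    | @tail p q h1 h2 ih =>
      have hreach_q : ReachP P e q := Relation.ReflTransGen.tail h1 h2
      have hep : EdgeP P p.1 p.2 := reach_edge he h1
      have hp1 : p.1 ∈ SpanP P e := (span_of_reach he h1).1
      have hp2 : p.2 ∈ SpanP P e := (span_of_reach he h1).2
      have hq2 : q.2 ∈ SpanP P e := (span_of_reach he hreach_q).2
      obtain ⟨_, heq, hstep⟩ := h2
      rcases hstep with hsw | ⟨hq1, hnadj, hne2⟩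
      · rw [hsw]
        exact ⟨ih.2, ih.1⟩
      · refine ⟨by rw [hq1]; exact ih.1, ?_⟩
        -- show EdgeP v q.2 ↔ EdgeP v p.2, then chain with ih.2
        have main : EdgeP P v q.2 ↔ EdgeP P v p.2 := by
          constructor
          · intro hvd
            by_contra hvp2
            -- first, v must be adjacent to p.1
            by_cases hv1 : EdgeP P p.1 v
            · -- step from p replacing p.2 by v
              have hstep2 : StepP P p (p.1, v) :=
                ⟨hep, hv1, Or.inr ⟨rfl, fun hh => hvp2 (Esymm hh), fun hh => hvne p.2 hp2 hh.symm⟩⟩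
              exact hv (span_of_reach he (Relation.ReflTransGen.tail h1 hstep2)).2
            · -- step from (q.2, q.1) replacing q.1 = p.1 by v
              have heq' : EdgeP P q.2 q.1 := Esymm heq
              have hstep2 : StepP P (q.2, q.1) (q.2, v) := by
                refine ⟨heq', Esymm hvd, Or.inr ⟨rfl, ?_, ?_⟩⟩
                · rw [hq1]; exact fun hh => hv1 hh
                · rw [hq1]; exact fun hh => hvne p.1 hp1 hh.symm
              have hr : ReachP P e (q.2, v) :=
                Relation.ReflTransGen.tail
                  (Relation.ReflTransGen.tail hreach_q (swap_step heq)) hstep2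
              exact hv (span_of_reach he hr).2
          · intro hvp2
            by_contra hvd
            by_cases hv1 : EdgeP P p.1 v
            · -- step from q replacing q.2 by v
              have hstep2 : StepP P q (q.1, v) := by
                refine ⟨heq, ?_, Or.inr ⟨rfl, fun hh => hvd (Esymm hh), fun hh => hvne q.2 hq2 hh.symm⟩⟩
                rw [hq1]; exact hv1
              exact hv (span_of_reach he (Relation.ReflTransGen.tail hreach_q hstep2)).2
            · -- step from (p.2, p.1) replacing p.1 by v
              have hstep2 : StepP P (p.2, p.1) (p.2, v) :=
                ⟨Esymm hep, Esymm hvp2,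
                  Or.inr ⟨rfl, fun hh => hv1 hh, fun hh => hvne p.1 hp1 hh.symm⟩⟩
              have hr : ReachP P e (p.2, v) :=
                Relation.ReflTransGen.tail
                  (Relation.ReflTransGen.tail h1 (swap_step hep)) hstep2
              exact hv (span_of_reach he hr).2
        exact main.trans ih.2
  by_cases hadj : (compGraph P).Adj v e.1
  · left
    intro a ha
    obtain ⟨w, hw⟩ := ha
    have := (key (a, w) hw).1
    exact (adj_iff P).2 (this.2 ((adj_iff P).1 hadj))
  · right
    intro a ha
    obtain ⟨w, hw⟩ := ha
    have := (key (a, w) hw).1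
    exact fun hc => hadj ((adj_iff P).2 (this.1 ((adj_iff P).1 hc)))

end H2lemmas
end H2

section H2main
variable {α : Type*}

open H2lemmas

lemma unique_orientation (P Q : PartialOrder α)
    (hprime : PrimeGraph (compGraph P))
    (hsame : ∀ x y, (P.lt x y ∨ P.lt y x) ↔ (Q.lt x y ∨ Q.lt y x)) :
    (∀ x y, Q.lt x y ↔ P.lt x y) ∨ (∀ x y, Q.lt x y ↔ P.lt y x) := by
  classical
  -- spans of forcing classes are all of α
  have span_univ : ∀ e : α × α, EdgeP P e.1 e.2 → SpanP P e = Set.univ := by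
    intro e he
    rcases hprime.2 (SpanP P e) (span_autonomous e he) with h | ⟨x, hx⟩ | h
    · have := mem_span_fst he
      rw [h] at this
      exact absurd this (Set.notMem_empty _)
    · have h1 := mem_span_fst he
      have h2 := mem_span_snd he
      rw [hx] at h1 h2
      exact absurd (h1.trans h2.symm) (Ene he)
    · exact h
  by_cases h1 : ∀ x y, EdgeP P x y → AgreePQ P Q x y
  · left
    intro x y
    constructor
    · intro hq
      have hE : EdgeP P x y := (hsame x y).2 (Or.inl hq)
      rcases h1 x y hE with ⟨hp, _⟩ | ⟨_, hq'⟩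
      · exact hp
      · exact absurd hq (fun h => plt_asymm Q h hq')
    · intro hp
      rcases h1 x y (Or.inl hp) with ⟨_, hq⟩ | ⟨hp', _⟩
      · exact hq
      · exact absurd hp (fun h => plt_asymm P h hp')
  · push_neg at h1
    obtain ⟨x0, y0, he0, hd0⟩ := h1
    by_cases h2 : ∀ x y, EdgeP P x y → ¬ AgreePQ P Q x y
    · right
      intro x y
      constructor
      · intro hq
        have hE : EdgeP P x y := (hsame x y).2 (Or.inl hq)
        rcases id hE with hp | hp
        · exact absurd (Or.inl ⟨hp, hq⟩) (h2 x y hE)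
        · exact hp
      · intro hp
        have hE : EdgeP P x y := Or.inr hp
        rcases (hsame x y).1 hE with hq | hq
        · exact hq
        · exact absurd (Or.inr ⟨hp, hq⟩) (h2 x y hE)
    · push_neg at h2
      obtain ⟨x1, y1, he1, hag1⟩ := h2
      exfalso
      -- x1 is in the span of the disagreeing class
      have hx1mem : x1 ∈ SpanP P (x0, y0) := by
        rw [span_univ (x0, y0) he0]; trivial
      obtain ⟨b, hb⟩ := hx1mem
      set a := x1 with ha
      set c := y1 with hc
      have hEab : EdgeP P a b := reach_edge he0 hb
      have hdis_ab : ¬ AgreePQ P Q a b := fun h => hd0 ((agree_reach hsame hb).2 h)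
      have hbc_ne : b ≠ c := by
        rintro rfl
        exact hdis_ab hag1
      have hEbc : EdgeP P b c := by
        by_contra hnot
        have hstep : StepP P (a, b) (a, c) := ⟨hEab, he1, Or.inr ⟨rfl, hnot, hbc_ne⟩⟩
        exact hd0 ((agree_reach hsame (Relation.ReflTransGen.tail hb hstep)).2 hag1)
      by_cases hbc : AgreePQ P Q b c
      · -- apex c over the class of (x0, y0), base edge (a, b)
        have hacne : a ≠ c := Ene he1
        have key : ∀ p, ReachP P (a, b) p →
            (p.1 ≠ c ∧ p.2 ≠ c ∧
             EdgeP P c p.1 ∧ AgreePQ P Q c p.1 ∧ EdgeP P c p.2 ∧ AgreePQ P Q c p.2) := by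
          intro p hp
          induction hp with
          | refl =>
            exact ⟨fun h => hacne h, fun h => hbc_ne h,
              Esymm he1, agree_symm hag1, Esymm hEbc, agree_symm hbc⟩
          | @tail p q hr1 hst ih =>
            have hreach_q : ReachP P (x0, y0) q :=
              reach_trans hb (Relation.ReflTransGen.tail hr1 hst)
            have hdisq : ¬ AgreePQ P Q q.1 q.2 :=
              fun h => hd0 ((agree_reach hsame hreach_q).2 h)
            obtain ⟨hep, heq, hstep⟩ := hst
            rcases hstep with hsw | ⟨hq1, hnadj, hne2⟩
            · rw [hsw]
              exact ⟨ih.2.1, ih.1, ih.2.2.2.2.1, ih.2.2.2.2.2, ih.2.2.1, ih.2.2.2.1⟩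
            · have h1c : q.1 ≠ c := by rw [hq1]; exact ih.1
              have hEcq1 : EdgeP P c q.1 := by rw [hq1]; exact ih.2.2.1
              have hAcq1 : AgreePQ P Q c q.1 := by rw [hq1]; exact ih.2.2.2.1
              -- the new endpoint q.2
              have hdc : q.2 ≠ c := by
                rintro rfl
                exact hdisq (agree_symm hAcq1)
              have hEcd : EdgeP P c q.2 := by
                by_contra hnot
                have hstep2 : StepP P q (q.1, c) :=
                  ⟨heq, Esymm hEcq1, Or.inr ⟨rfl, fun hh => hnot (Esymm hh), hdc⟩⟩
                have : ¬ AgreePQ P Q q.1 c :=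
                  fun h => hd0 ((agree_reach hsame
                    (Relation.ReflTransGen.tail hreach_q hstep2)).2 h)
                exact this (agree_symm hAcq1)
              have hAcd : AgreePQ P Q c q.2 := by
                have hstep2 : StepP P (c, p.2) (c, q.2) :=
                  ⟨ih.2.2.2.2.1, hEcd, Or.inr ⟨rfl, hnadj, hne2⟩⟩
                exact (agree_step hsame hstep2).1 ih.2.2.2.2.2
              exact ⟨h1c, hdc, hEcq1, hAcq1, hEcd, hAcd⟩
        -- c is in the span of the class of (x0,y0) = span of class of (a,b)
        have hcmem : c ∈ SpanP P (x0, y0) := by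
          rw [span_univ (x0, y0) he0]; trivial
        obtain ⟨w, hw⟩ := hcmem
        have hcw : ReachP P (a, b) (c, w) := reach_trans (reach_symm hb) hw
        exact (key (c, w) hcw).1 rfl
      · -- apex b over the class of (a, c) = (x1, y1)
        have hspan1 := span_univ (a, c) he1
        have hbmem : b ∈ SpanP P (a, c) := by rw [hspan1]; trivial
        obtain ⟨w, hw⟩ := hbmem
        have key : ∀ p, ReachP P (a, c) p →
            (p.1 ≠ b ∧ p.2 ≠ b ∧
             EdgeP P b p.1 ∧ ¬ AgreePQ P Q b p.1 ∧ EdgeP P b p.2 ∧ ¬ AgreePQ P Q b p.2) := by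
          intro p hp
          induction hp with
          | refl =>
            exact ⟨fun h => Ene hEab h, fun h => hbc_ne h.symm,
              Esymm hEab, fun h => hdis_ab (agree_symm h), hEbc, hbc⟩
          | @tail p q hr1 hst ih =>
            have hreach_q : ReachP P (a, c) q := Relation.ReflTransGen.tail hr1 hst
            have hagq : AgreePQ P Q q.1 q.2 := (agree_reach hsame hreach_q).1 hag1
            obtain ⟨hep, heq, hstep⟩ := hst
            rcases hstep with hsw | ⟨hq1, hnadj, hne2⟩
            · rw [hsw]
              exact ⟨ih.2.1, ih.1, ih.2.2.2.2.1, ih.2.2.2.2.2, ih.2.2.1, ih.2.2.2.1⟩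
            · have h1b : q.1 ≠ b := by rw [hq1]; exact ih.1
              have hEbq1 : EdgeP P b q.1 := by rw [hq1]; exact ih.2.2.1
              have hAbq1 : ¬ AgreePQ P Q b q.1 := by rw [hq1]; exact ih.2.2.2.1
              have hdb : q.2 ≠ b := by
                rintro rfl
                exact hAbq1 (agree_symm hagq)
              have hEbd : EdgeP P b q.2 := by
                by_contra hnot
                have hstep2 : StepP P q (q.1, b) :=
                  ⟨heq, Esymm hEbq1, Or.inr ⟨rfl, fun hh => hnot (Esymm hh), hdb⟩⟩
                have : AgreePQ P Q q.1 b := (agree_reach hsame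
                    (Relation.ReflTransGen.tail hreach_q hstep2)).1 hag1
                exact hAbq1 (agree_symm this)
              have hAbd : ¬ AgreePQ P Q b q.2 := by
                have hstep2 : StepP P (b, p.2) (b, q.2) :=
                  ⟨ih.2.2.2.2.1, hEbd, Or.inr ⟨rfl, hnadj, hne2⟩⟩
                exact fun h => ih.2.2.2.2.2 ((agree_step hsame hstep2).2 h)
              exact ⟨h1b, hdb, hEbq1, hAbq1, hEbd, hAbd⟩
        exact (key (b, w) hw).1 rfl
end H2main

/-- A poset is minimal prime if and only if its comparability graph is
a minimal prime graph. -/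
theorem poset_minimal_prime_iff {α : Type*} (P : PartialOrder α) :
    PosetMinimalPrime P ↔ MinimalPrimeGraph (compGraph P) := by
  constructor
  · rintro ⟨hPp, hmin⟩
    refine ⟨posetPrime_to_graphPrime P hPp, ?_⟩
    intro W hcard hWprime
    have hWg : PrimeGraph (compGraph (inducedPoset P W)) := by
      rw [compGraph_induce]; exact hWprime
    have hWp : PosetPrime (inducedPoset P W) := graphPrime_to_posetPrime _ hWg
    obtain ⟨g, hg⟩ := hmin W hcard hWp
    have hginj : Function.Injective g := by
      intro x y h
      have h1 : P.le x y := (hg x y).2 (by rw [h]; exact (inducedPoset P W).le_refl _)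
      have h2 : P.le y x := (hg y x).2 (by rw [h]; exact (inducedPoset P W).le_refl _)
      exact P.le_antisymm _ _ h1 h2
    refine ⟨⟨⟨g, hginj⟩, ?_⟩⟩
    intro x y
    show ((compGraph P).induce W).Adj (g x) (g y) ↔ (compGraph P).Adj x y
    rw [← compGraph_induce]
    show (SimpleGraph.fromRel _).Adj _ _ ↔ (SimpleGraph.fromRel _).Adj _ _
    rw [SimpleGraph.fromRel_adj, SimpleGraph.fromRel_adj]
    constructor
    · rintro ⟨hne, h⟩
      refine ⟨fun he => hne (congrArg g he), ?_⟩
      rcases h with h | h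
      · exact Or.inl ((hg x y).2 h)
      · exact Or.inr ((hg y x).2 h)
    · rintro ⟨hne, h⟩
      refine ⟨fun he => hne (hginj he), ?_⟩
      rcases h with h | h
      · exact Or.inl ((hg x y).1 h)
      · exact Or.inr ((hg y x).1 h)
  · rintro ⟨hGp, hming⟩
    have hPp : PosetPrime P := graphPrime_to_posetPrime P hGp
    refine ⟨hPp, ?_⟩
    intro W hcard hWp
    have hWg : PrimeGraph ((compGraph P).induce W) := by
      rw [← compGraph_induce]
      exact posetPrime_to_graphPrime _ hWp
    obtain ⟨f⟩ := hming W hcard hWg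
    set fb : α → α := fun x => (f x : W).1 with hfb
    have hfb_inj : Function.Injective fb := by
      intro x y h
      exact f.injective (Subtype.ext h)
    set Q : PartialOrder α := {
      le := fun x y => P.le (fb x) (fb y)
      lt := fun x y => P.lt (fb x) (fb y)
      le_refl := fun x => P.le_refl _
      le_trans := fun a b c h h' => P.le_trans _ _ _ h h'
      lt_iff_le_not_ge := fun a b => P.lt_iff_le_not_ge _ _
      le_antisymm := fun a b h h' => hfb_inj (P.le_antisymm _ _ h h') } with hQdef
    have hadj : ∀ x y : α, (compGraph P).Adj (fb x) (fb y) ↔ (compGraph P).Adj x y := by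
      intro x y
      exact f.map_rel_iff
    have hsame : ∀ x y, (P.lt x y ∨ P.lt y x) ↔ (Q.lt x y ∨ Q.lt y x) := by
      intro x y
      have c1 : (P.lt x y ∨ P.lt y x) ↔ (compGraph P).Adj x y := (adj_iff P).symm
      have c2 : (compGraph P).Adj x y ↔ (compGraph P).Adj (fb x) (fb y) := (hadj x y).symm
      have c3 : (compGraph P).Adj (fb x) (fb y) ↔ (P.lt (fb x) (fb y) ∨ P.lt (fb y) (fb x)) :=
        adj_iff P
      exact (c1.trans c2).trans c3
    rcases unique_orientation P Q hGp hsame with hcase | hcase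
    · refine ⟨fun x => f x, ?_⟩
      intro x y
      show P.le x y ↔ P.le (fb x) (fb y)
      rw [ple_iff P (x := x) (y := y), ple_iff P (x := fb x) (y := fb y)]
      constructor
      · rintro (rfl | h)
        · exact Or.inl rfl
        · exact Or.inr ((hcase x y).2 h)
      · rintro (he | h)
        · exact Or.inl (hfb_inj he)
        · exact Or.inr ((hcase x y).1 h)
    · refine ⟨fun x => f (fb x), ?_⟩
      intro x y
      show P.le x y ↔ P.le (fb (fb x)) (fb (fb y))
      have hflip : ∀ u v, P.lt (fb u) (fb v) ↔ P.lt v u := fun u v => hcase u v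
      have hlt2 : P.lt (fb (fb x)) (fb (fb y)) ↔ P.lt x y :=
        (hflip (fb x) (fb y)).trans (hflip y x)
      rw [ple_iff P (x := x) (y := y), ple_iff P (x := fb (fb x)) (y := fb (fb y))]
      constructor
      · rintro (rfl | h)
        · exact Or.inl rfl
        · exact Or.inr (hlt2.2 h)
      · rintro (he | h)
        · exact Or.inl (hfb_inj (hfb_inj he))
        · exact Or.inr (hlt2.1 h)
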